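/- Let v be monotone submodular with v(∅)=0 and X a maximal decision map. In the monopolistic seller game, where a single seller sets all prices p ∈ ℝ^N_{≥0} and earns u(p) = Σ_{j∈X(p)} p_j, we have sup_p u(p) = max_{S⊆N} Σ_{i∈S} [v(S) - v(S\{i})]. -/

import Mathlib

lemma stmt16_key {n : ℕ} (v : Finset (Fin n) → ℝ)
    (hsub : ∀ S T : Finset (Fin n), v (S ∪ T) + v (S ∩ T) ≤ v S + v T)
    (S : Finset (Fin n)) :
    ∀ D : Finset (Fin n), D ⊆ S →
      v (S \ D) + ∑ i ∈ D, (v S - v (S.erase i)) ≤ v S := by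
  intro D
  induction D using Finset.induction_on with
  | empty => simp
  | @insert a D ha ih =>
    intro hDS
    have haS : a ∈ S := hDS (Finset.mem_insert_self a D)
    have hD : D ⊆ S := fun x hx => hDS (Finset.mem_insert_of_mem hx)
    have haD : a ∈ S \ D := Finset.mem_sdiff.2 ⟨haS, ha⟩
    have h1 : (S.erase a) ∪ (S \ D) = S := by
      ext x
      simp only [Finset.mem_union, Finset.mem_erase, Finset.mem_sdiff]
      constructor
      · rintro (⟨_, h⟩ | ⟨h, _⟩) <;> exact h
      · intro hx
        by_cases hxa : x = a
        · exact Or.inr ⟨hx, hxa ▸ ha⟩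
        · exact Or.inl ⟨hxa, hx⟩
    have h2 : (S.erase a) ∩ (S \ D) = S \ insert a D := by
      ext x
      simp only [Finset.mem_inter, Finset.mem_erase, Finset.mem_sdiff,
        Finset.mem_insert]
      tauto
    have hs := hsub (S.erase a) (S \ D)
    rw [h1, h2] at hs
    have := ih hD
    rw [Finset.sum_insert ha]
    linarith

/-- Monopolistic seller with monotone submodular `v` and maximal
decision map `X`: the supremum of the revenue `u(p) = ∑_{j ∈ X p} p j` over
nonnegative price vectors equals `max_S ∑_{i∈S} (v S - v (S \ {i}))`, stated as
mutual domination. -/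
theorem stmt16 {n : ℕ} (v : Finset (Fin n) → ℝ)
    (hmono : ∀ S T : Finset (Fin n), S ⊆ T → v S ≤ v T)
    (hsub : ∀ S T : Finset (Fin n), v (S ∪ T) + v (S ∩ T) ≤ v S + v T)
    (hv0 : v ∅ = 0)
    (X : (Fin n → ℝ) → Finset (Fin n))
    (hXd : ∀ q : Fin n → ℝ, (∀ i, 0 ≤ q i) → ∀ T : Finset (Fin n),
      v T - ∑ i ∈ T, q i ≤ v (X q) - ∑ i ∈ X q, q i)
    (hXmax : ∀ q : Fin n → ℝ, (∀ i, 0 ≤ q i) → ∀ T : Finset (Fin n),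
      (∀ U : Finset (Fin n), v U - ∑ i ∈ U, q i ≤ v T - ∑ i ∈ T, q i) →
      ¬ X q ⊂ T) :
    (∀ p : Fin n → ℝ, (∀ i, 0 ≤ p i) → ∃ S : Finset (Fin n),
      ∑ j ∈ X p, p j ≤ ∑ i ∈ S, (v S - v (S.erase i))) ∧
    (∀ S : Finset (Fin n), ∃ p : Fin n → ℝ, (∀ i, 0 ≤ p i) ∧
      ∑ i ∈ S, (v S - v (S.erase i)) ≤ ∑ j ∈ X p, p j) := by
  classical
  have hvnonneg : ∀ T : Finset (Fin n), 0 ≤ v T := fun T => by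
    have := hmono ∅ T (Finset.empty_subset T); linarith [this, hv0.ge]
  constructor
  · -- direction ≤ : take S = X p
    intro p hp
    refine ⟨X p, Finset.sum_le_sum ?_⟩
    intro i hi
    have h := hXd p hp ((X p).erase i)
    have hsum : ∑ j ∈ X p, p j = p i + ∑ j ∈ (X p).erase i, p j :=
      (Finset.add_sum_erase _ _ hi).symm
    linarith [h, hsum.le, hsum.ge]
  · -- direction ≥ : marginal prices on S, huge prices outside
    intro S
    set M : ℝ := v Finset.univ + 1 with hM
    set p : Fin n → ℝ := fun i => if i ∈ S then v S - v (S.erase i) else M with hpdef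
    have hp : ∀ i, 0 ≤ p i := by
      intro i
      by_cases hi : i ∈ S
      · simp only [hpdef, if_pos hi]
        linarith [hmono (S.erase i) S (Finset.erase_subset i S)]
      · simp only [hpdef, if_neg hi, hM]
        linarith [hvnonneg Finset.univ]
    have hpS : ∀ T : Finset (Fin n), T ⊆ S →
        ∑ i ∈ T, p i = ∑ i ∈ T, (v S - v (S.erase i)) := by
      intro T hT
      refine Finset.sum_congr rfl fun i hi => ?_
      simp [hpdef, hT hi]
    -- S is a global maximizer
    have hSmax : ∀ U : Finset (Fin n),
        v U - ∑ i ∈ U, p i ≤ v S - ∑ i ∈ S, p i := by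
      intro U
      -- first reduce to U ∩ S
      have step1 : v U - ∑ i ∈ U, p i ≤ v (U ∩ S) - ∑ i ∈ U ∩ S, p i := by
        have hsplit : ∑ i ∈ U, p i = ∑ i ∈ U ∩ S, p i + ∑ i ∈ U \ S, p i := by
          rw [← Finset.sum_union (Finset.disjoint_of_subset_left
            (Finset.inter_subset_right) Finset.sdiff_disjoint.symm)]
          congr 1
          ext x
          simp only [Finset.mem_union, Finset.mem_inter, Finset.mem_sdiff]
          tauto
        by_cases hUS : U \ S = ∅
        · have : U ∩ S = U := by
            rw [Finset.inter_eq_left]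
            intro x hx
            by_contra hxs
            exact (Finset.eq_empty_iff_forall_notMem.1 hUS x)
              (Finset.mem_sdiff.2 ⟨hx, hxs⟩)
          rw [hsplit, hUS, this]
          simp
        · obtain ⟨a, haU⟩ := Finset.nonempty_iff_ne_empty.2 hUS
          have hpa : p a = M := by
            simp [hpdef, (Finset.mem_sdiff.1 haU).2]
          have hge : M ≤ ∑ i ∈ U \ S, p i := by
            calc M = p a := hpa.symm
            _ ≤ ∑ i ∈ U \ S, p i :=
              Finset.single_le_sum (fun i _ => hp i) haU
          have hU : v U ≤ v Finset.univ := hmono U _ (Finset.subset_univ U)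
          have hUSn : 0 ≤ v (U ∩ S) := hvnonneg _
          rw [hsplit]
          simp only [hM] at hge
          linarith
      -- then compare U ∩ S with S via the key lemma
      have hsub' : U ∩ S ⊆ S := Finset.inter_subset_right
      have hkey := stmt16_key v hsub S (S \ (U ∩ S)) (Finset.sdiff_subset)
      have hSS : S \ (S \ (U ∩ S)) = U ∩ S :=
        (Finset.sdiff_sdiff_self_left S (U ∩ S)).trans (Finset.inter_eq_right.2 hsub')
      rw [hSS] at hkey
      have hsplitS : ∑ i ∈ S, p i
          = ∑ i ∈ U ∩ S, p i + ∑ i ∈ S \ (U ∩ S), p i := by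
        rw [← Finset.sum_union (Finset.disjoint_sdiff)]
        congr 1
        rw [Finset.union_sdiff_of_subset hsub']
      have hps : ∑ i ∈ S \ (U ∩ S), p i
          = ∑ i ∈ S \ (U ∩ S), (v S - v (S.erase i)) :=
        hpS _ (Finset.sdiff_subset)
      rw [hps] at hsplitS
      linarith [step1]
    -- X p ⊆ S
    have hXsub : X p ⊆ S := by
      intro i hi
      by_contra hiS
      have h := hXd p hp ((X p).erase i)
      have hsum : ∑ j ∈ X p, p j = p i + ∑ j ∈ (X p).erase i, p j :=
        (Finset.add_sum_erase _ _ hi).symm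
      have hpi : p i = M := by simp [hpdef, hiS]
      have h1 : v (X p) ≤ v Finset.univ := hmono _ _ (Finset.subset_univ _)
      have h2 : 0 ≤ v ((X p).erase i) := hvnonneg _
      rw [hsum, hpi] at h
      simp only [hM] at h
      linarith
    -- X p is not a strict subset of S, hence X p = S
    have hne := hXmax p hp S hSmax
    have hXS : X p = S := by
      by_contra hEq
      exact hne (Finset.ssubset_iff_subset_ne.2 ⟨hXsub, hEq⟩)
    refine ⟨p, hp, ?_⟩
    rw [hXS, hpS S (Finset.Subset.refl S)]
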